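/- The function φ: ℝ → ℝ given by φ(p) = p^3 + p is injective, but there is no rational function r with real coefficients such that r(p^3 + p) = p for all p in the domain of r. -/

import Mathlib

open Polynomial

theorem cubic_injective_but_not_rationally_identifiable :
    Function.Injective (fun p : ℝ => p ^ 3 + p) ∧
    ¬ ∃ (num den : Polynomial ℝ), den ≠ 0 ∧
        ∀ p : ℝ, den.eval (p ^ 3 + p) ≠ 0 →
          num.eval (p ^ 3 + p) / den.eval (p ^ 3 + p) = p := by
  constructor
  · have : StrictMono (fun p : ℝ => p ^ 3 + p) := by
      intro a b hab
      simp only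
      nlinarith [sq_nonneg (a + b), sq_nonneg a, sq_nonneg b, sq_nonneg (a - b)]
    exact this.injective
  · rintro ⟨num, den, hden, h⟩
    set q : Polynomial ℝ := X ^ 3 + X with hq
    have hqdeg : q.natDegree = 3 := by
      rw [hq]; compute_degree!
    have hqnc : q ≠ C (q.coeff 0) := by
      intro hcontr
      have := congrArg natDegree hcontr
      simp [hqdeg] at this
    have hdq : den.comp q ≠ 0 := by
      intro hc
      rw [Polynomial.comp_eq_zero_iff] at hc
      rcases hc with hc | hc
      · exact hden hc
      · exact hqnc hc.2
    set f : Polynomial ℝ := num.comp q - X * den.comp q with hf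
    have hf0 : f = 0 := by
      apply Polynomial.eq_zero_of_infinite_isRoot
      have hfin : {x : ℝ | (den.comp q).IsRoot x}.Finite :=
        Polynomial.finite_setOf_isRoot hdq
      apply Set.Infinite.mono (s := {x : ℝ | (den.comp q).IsRoot x}ᶜ)
      · intro p hp
        simp only [Set.mem_compl_iff, Set.mem_setOf_eq, IsRoot.def, eval_comp] at hp
        have hev : (q.eval p) = p ^ 3 + p := by simp [hq]
        rw [hev] at hp
        have := h p hp
        have hne : den.eval (p ^ 3 + p) ≠ 0 := hp
        have heq : num.eval (p ^ 3 + p) = p * den.eval (p ^ 3 + p) := by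
          rw [div_eq_iff hne] at this
          linarith [this]
        simp only [Set.mem_setOf_eq, IsRoot.def, hf, eval_sub, eval_mul, eval_X, eval_comp, hev,
          heq, sub_self]
      · exact Set.Finite.infinite_compl hfin
    have heq2 : num.comp q = X * den.comp q := by
      have := sub_eq_zero.mp hf0
      exact this
    have hdeg := congrArg natDegree heq2
    rw [Polynomial.natDegree_comp, Polynomial.natDegree_mul (by exact X_ne_zero) hdq,
      Polynomial.natDegree_comp, natDegree_X, hqdeg] at hdeg
    omega
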